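/- Let N ≥ 2 be an integer and z : ℤ/Nℤ → ℂ a function with z(−a) = −z(a) for all a. For each positive divisor d of N with N_d = N/d > 2, choose a set T_d ⊆ (ℤ/N_dℤ)^× of representatives for the quotient (ℤ/N_dℤ)^×/{±1}. Then det(S_N·Z_N) = ∏_{d | N, N_d > 2} det(G_d), where G_d is the square matrix indexed by u, v ∈ T_d whose (u,v)-entry is d·ẑ_d(u·v^{−1}). -/

import Mathlib

open Finset Real

/-- The discrete sine matrix `S_N`, of size `N⁻ × N⁻` with `N⁻ = ⌊(N−1)/2⌋`. -/
noncomputable def sinMatrix (N : ℕ) : Matrix (Fin ((N - 1) / 2)) (Fin ((N - 1) / 2)) ℝ :=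
  Matrix.of fun m n => Real.sin (2 * Real.pi * ((m : ℕ) + 1) * ((n : ℕ) + 1) / N)

/-- The matrix `Z_N` attached to an odd function `z : ℤ/Nℤ → ℂ`. -/
def ZMat (N : ℕ) (z : ZMod N → ℂ) : Matrix (Fin ((N - 1) / 2)) (Fin ((N - 1) / 2)) ℂ :=
  Matrix.of fun i j => z ((((i : ℕ) + 1) : ZMod N) * (((j : ℕ) + 1) : ZMod N))

/-- `ẑ_d(t) = (1/2)·Σ_{r=1}^{N_d} z(dr mod N)·sin(2πtr/N_d)`, where `N_d = N/d`. -/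
noncomputable def zhat (N d : ℕ) (z : ZMod N → ℂ) (t : ZMod (N / d)) : ℂ :=
  (1 / 2 : ℂ) * ∑ r ∈ Finset.Icc 1 (N / d),
    z (((d * r : ℕ) : ZMod N)) *
      (Real.sin (2 * Real.pi * (ZMod.val t) * r / ((N / d : ℕ) : ℝ)) : ℝ)



noncomputable def sZ (n : ℕ) (t : ZMod n) : ℝ := Real.sin (2 * Real.pi * t.val / n)

lemma sZ_natCast (n : ℕ) (hn : 0 < n) (a : ℕ) :
    sZ n (a : ZMod n) = Real.sin (2 * Real.pi * a / n) := by
  haveI : NeZero n := ⟨hn.ne'⟩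
  unfold sZ
  rw [ZMod.val_natCast]
  have h1 : (2 * Real.pi * a / n : ℝ) = 2 * Real.pi * (a % n : ℕ) / n + ((a / n : ℕ) : ℤ) * (2 * Real.pi) := by
    have h2 : (a : ℝ) = (a % n : ℕ) + n * (a / n : ℕ) := by
      exact_mod_cast (Nat.mod_add_div a n).symm
    push_cast
    field_simp [h2]
    norm_cast
    push_cast
    linear_combination h2
  rw [h1, Real.sin_add_int_mul_two_pi]

lemma sZ_neg (n : ℕ) (hn : 0 < n) (t : ZMod n) : sZ n (-t) = - sZ n t := by
  haveI : NeZero n := ⟨hn.ne'⟩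
  rcases eq_or_ne t 0 with rfl | ht
  · simp [sZ]
  · unfold sZ
    rw [ZMod.neg_val, if_neg ht]
    have hv : t.val ≤ n := (ZMod.val_lt t).le
    have h1 : (2 * Real.pi * ((n - t.val : ℕ) : ℝ) / n) = -(2 * Real.pi * t.val / n) + (1 : ℤ) * (2 * Real.pi) := by
      rw [Nat.cast_sub hv]
      field_simp
      ring
    rw [h1, Real.sin_add_int_mul_two_pi, Real.sin_neg]

lemma sum_zmod_eq_range (n : ℕ) [NeZero n] (f : ZMod n → ℂ) :
    ∑ t : ZMod n, f t = ∑ r ∈ range n, f r := by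
  refine Finset.sum_nbij' (fun t => t.val) (fun r => (r : ZMod n)) ?_ ?_ ?_ ?_ ?_
  · intro a _; exact mem_range.2 (ZMod.val_lt a)
  · intro a _; exact mem_univ _
  · intro a _; exact ZMod.natCast_rightInverse a
  · intro a ha; exact ZMod.val_cast_of_lt (mem_range.1 ha)
  · intro a _; rw [ZMod.natCast_rightInverse a]


lemma sum_range_mul_decomp (f : ℕ → ℂ) (A B : ℕ) :
    ∑ k ∈ range (A * B), f k = ∑ s ∈ range B, ∑ r ∈ range A, f (A * s + r) := by
  rcases Nat.eq_zero_or_pos A with rfl | hA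
  · simp
  rw [← Finset.sum_product']
  refine Finset.sum_nbij' (fun k => (k / A, k % A)) (fun p => A * p.1 + p.2) ?_ ?_ ?_ ?_ ?_
  · intro k hk
    rw [Finset.mem_product]
    have hk := mem_range.1 hk
    constructor
    · exact mem_range.2 (Nat.div_lt_of_lt_mul (by omega))
    · exact mem_range.2 (Nat.mod_lt _ hA)
  · intro p hp
    rw [Finset.mem_product] at hp
    have h1 := mem_range.1 hp.1
    have h2 := mem_range.1 hp.2
    refine mem_range.2 ?_
    calc A * p.1 + p.2 < A * p.1 + A := by omega
    _ = A * (p.1 + 1) := by ring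
    _ ≤ A * B := Nat.mul_le_mul_left _ (by omega)
  · intro k _; exact Nat.div_add_mod k A
  · intro p hp
    rw [Finset.mem_product] at hp
    have h2 := mem_range.1 hp.2
    simp [Nat.mul_add_div hA, Nat.mul_add_mod, Nat.div_eq_of_lt h2, Nat.mod_eq_of_lt h2]
  · intro k _
    simp only []
    rw [Nat.div_add_mod]


lemma sum_sin_arith (θ : ℝ) (a d : ℕ) (hd : 0 < d) :
    ∑ s ∈ range d, Real.sin (θ + 2 * Real.pi * a * s / d) =
      if d ∣ a then d * Real.sin θ else 0 := by
  have hd' : (d : ℝ) ≠ 0 := Nat.cast_ne_zero.2 hd.ne'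
  split_ifs with hdvd
  · obtain ⟨c, rfl⟩ := hdvd
    have this : ∀ s ∈ range d, Real.sin (θ + 2 * Real.pi * ((d * c : ℕ) : ℝ) * s / d) = Real.sin θ := by
      intro s _
      have h1 : (θ + 2 * Real.pi * ((d * c : ℕ) : ℝ) * s / d) = θ + ((c * s : ℕ) : ℤ) * (2 * Real.pi) := by
        push_cast
        field_simp
      rw [h1, Real.sin_add_int_mul_two_pi]
    rw [Finset.sum_congr rfl this, Finset.sum_const, card_range, nsmul_eq_mul]
  · set x : ℂ := Complex.exp ((2 * Real.pi * a / d : ℝ) * Complex.I) with hx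
    have hterm : ∀ s : ℕ, Real.sin (θ + 2 * Real.pi * a * s / d) =
        (Complex.exp ((θ : ℝ) * Complex.I) * x ^ s).im := by
      intro s
      rw [← Complex.exp_ofReal_mul_I_im]
      congr 1
      rw [hx, ← Complex.exp_nat_mul, ← Complex.exp_add]
      congr 1
      push_cast
      ring
    have hsum : ∑ s ∈ range d, Real.sin (θ + 2 * Real.pi * a * s / d) =
        (Complex.exp ((θ : ℝ) * Complex.I) * ∑ s ∈ range d, x ^ s).im := by
      rw [Finset.mul_sum, Complex.im_sum]
      exact Finset.sum_congr rfl fun s _ => hterm s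
    have hx1 : x ≠ 1 := by
      intro h
      rw [hx, Complex.exp_eq_one_iff] at h
      obtain ⟨n, hn⟩ := h
      have him := congrArg Complex.im hn
      simp [Complex.mul_im, Complex.mul_re] at him
      have h2 : 2 * Real.pi * (a : ℝ) = 2 * Real.pi * ((n : ℝ) * d) := by
        field_simp at him
        rw [him]; ring
      have h3 := mul_left_cancel₀ (by positivity : (2 * Real.pi : ℝ) ≠ 0) h2
      have h4 : (a : ℤ) = n * d := by exact_mod_cast h3
      exact hdvd (Int.natCast_dvd_natCast.1 ⟨n, by linarith⟩)
    have hxd : x ^ d = 1 := by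
      rw [hx, ← Complex.exp_nat_mul]
      rw [show (d : ℂ) * ((2 * Real.pi * a / d : ℝ) * Complex.I) = (a : ℤ) * (2 * Real.pi * Complex.I) by
        have hdc : (d:ℂ) ≠ 0 := Nat.cast_ne_zero.2 hd.ne'
        push_cast
        field_simp]
      exact Complex.exp_int_mul_two_pi_mul_I a
    rw [hsum, geom_sum_eq hx1, hxd]
    simp


lemma range_sum_fold (N : ℕ) (hN : 2 ≤ N) (f : ℕ → ℂ)
    (h0 : f 0 = 0) (hsym : ∀ k, 1 ≤ k → k ≤ N - 1 → f (N - k) = f k)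
    (hhalf : 2 ∣ N → f (N / 2) = 0) :
    ∑ k ∈ range N, f k = 2 * ∑ k ∈ Icc 1 ((N - 1) / 2), f k := by
  set h := (N - 1) / 2 with hh
  have h1 : 2 * h ≤ N - 1 := by omega
  have key : ∑ k ∈ Ico (h + 1) N, f k = ∑ k ∈ Ico 1 (N - h), f k := by
    refine Finset.sum_nbij' (fun k => N - k) (fun k => N - k) ?_ ?_ ?_ ?_ ?_
    · intro k hk; simp only [mem_Ico] at *; omega
    · intro k hk; simp only [mem_Ico] at *; omega
    · intro k hk; simp only [mem_Ico] at hk; show N - (N - k) = k; omega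
    · intro k hk; simp only [mem_Ico] at hk; show N - (N - k) = k; omega
    · intro k hk; simp only [mem_Ico] at hk
      show f k = f (N - k)
      have h2 := hsym (N - k) (by omega) (by omega)
      rw [show N - (N - k) = k by omega] at h2
      exact h2
  have split1 : ∑ k ∈ range N, f k = f 0 + ∑ k ∈ Ico 1 N, f k := by
    rw [Finset.range_eq_Ico, ← Finset.sum_Ico_consecutive f (by omega : (0:ℕ) ≤ 1) (by omega : 1 ≤ N)]
    simp
  have split2 : ∑ k ∈ Ico 1 N, f k = ∑ k ∈ Ico 1 (h+1), f k + ∑ k ∈ Ico (h+1) N, f k :=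
    (Finset.sum_Ico_consecutive f (by omega) (by omega)).symm
  have split3 : ∑ k ∈ Ico 1 (N - h), f k = ∑ k ∈ Ico 1 (h+1), f k + ∑ k ∈ Ico (h+1) (N-h), f k :=
    (Finset.sum_Ico_consecutive f (by omega) (by omega)).symm
  have last : ∑ k ∈ Ico (h+1) (N-h), f k = 0 := by
    rcases Nat.even_or_odd N with ⟨p, hp⟩ | ⟨p, hp⟩
    · have hNh : N - h = h + 2 := by omega
      have hmid : h + 1 = N / 2 := by omega
      have hsing : Ico (h+1) (h+2) = {h+1} := by ext x; simp only [mem_Ico, mem_singleton]; omega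
      rw [hNh, hsing, Finset.sum_singleton, hmid]
      exact hhalf ⟨p, by omega⟩
    · have hNh : N - h = h + 1 := by omega
      rw [hNh]
      simp
  have hIccIco : Icc 1 h = Ico 1 (h+1) := by rw [Finset.Ico_add_one_right_eq_Icc]
  rw [split1, split2, key, split3, last, h0, hIccIco]
  ring


noncomputable def Wf (N : ℕ) (z : ZMod N → ℂ) (a b : ℕ) : ℂ :=
  (1 / 2 : ℂ) * ∑ k ∈ range N, (Real.sin (2 * Real.pi * a * k / N) : ℝ) * z (((k * b : ℕ) : ZMod N))

-- key cast fact: d * r mod N depends only on r mod (N/d)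
lemma dmul_cast (N d : ℕ) (hd : d ∣ N) (hN : 0 < N) (r : ℕ) :
    (((d * r : ℕ) : ZMod N)) = ((d * ((r : ZMod (N/d))).val : ℕ) : ZMod N) := by
  have hd0 : 0 < d := Nat.pos_of_dvd_of_pos hd hN
  have hNd : 0 < N / d := Nat.div_pos (Nat.le_of_dvd hN hd) hd0
  haveI : NeZero (N/d) := ⟨hNd.ne'⟩
  have hval : ((r : ZMod (N/d))).val = r % (N/d) := ZMod.val_natCast (N/d) r
  rw [hval]
  have hdm : d * (N/d) = N := Nat.mul_div_cancel' hd
  have hr : d * r = N * (r / (N/d)) + d * (r % (N/d)) := by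
    conv_lhs => rw [← Nat.mod_add_div r (N/d)]
    rw [mul_add, ← mul_assoc, hdm, add_comm]
  rw [hr]
  push_cast
  simp [ZMod.natCast_self]

lemma zhat_eq (N d : ℕ) (hd : d ∣ N) (hN : 0 < N) [NeZero (N / d)] (z : ZMod N → ℂ) (hz0 : z 0 = 0)
    (t : ZMod (N / d)) :
    zhat N d z t = (1 / 2 : ℂ) *
      ∑ x : ZMod (N / d), z (((d * x.val : ℕ) : ZMod N)) * ((sZ (N / d) (t * x) : ℝ) : ℂ) := by
  have hd0 : 0 < d := Nat.pos_of_dvd_of_pos hd hN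
  have hNd : 0 < N / d := Nat.div_pos (Nat.le_of_dvd hN hd) hd0
  haveI : NeZero (N/d) := ⟨hNd.ne'⟩
  unfold zhat
  congr 1
  rw [sum_zmod_eq_range]
  have hterm : ∀ r : ℕ, z (((d * r : ℕ) : ZMod N)) *
      ((Real.sin (2 * Real.pi * (ZMod.val t) * r / ((N / d : ℕ) : ℝ)) : ℝ) : ℂ)
      = z (((d * ((r : ZMod (N/d))).val : ℕ) : ZMod N)) * ((sZ (N/d) (t * r) : ℝ) : ℂ) := by
    intro r
    rw [← dmul_cast N d hd hN r]
    congr 2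
    have h2 : (2 * Real.pi * (ZMod.val t) * r / ((N / d : ℕ) : ℝ)) =
        2 * Real.pi * ((t.val * r : ℕ) : ℝ) / ((N/d : ℕ) : ℝ) := by push_cast; ring
    rw [h2, ← sZ_natCast (N/d) hNd (t.val * r)]
    congr 1
    push_cast
    rw [ZMod.natCast_rightInverse t]
  have key : ∀ (g : ℕ → ℂ), g 0 = 0 → g (N/d) = 0 →
      ∑ r ∈ Finset.Icc 1 (N/d), g r = ∑ r ∈ range (N/d), g r := by
    intro g g0 gm
    rw [Finset.range_eq_Ico, show Finset.Icc 1 (N/d) = Finset.Ico 1 (N/d+1) from by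
      rw [Finset.Ico_add_one_right_eq_Icc]]
    rw [Finset.sum_Ico_succ_top hNd, gm, add_zero]
    rw [← Finset.sum_Ico_consecutive g (by omega : (0:ℕ) ≤ 1) hNd]
    simp [g0]
  rw [key _ (by simp [hz0]) ?_]
  · exact Finset.sum_congr rfl fun r _ => hterm r
  · rw [Nat.mul_div_cancel' hd, ZMod.natCast_self, hz0, zero_mul]

lemma Wf_sum_decomp (N : ℕ) (hN : 0 < N) (z : ZMod N → ℂ) (a b d : ℕ)
    (hdN : d ∣ N) (hd0 : 0 < d) (hdb : d ∣ b) :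
    Wf N z a b = (1 / 2 : ℂ) * ∑ r ∈ range (N / d),
      ((∑ s ∈ range d, Real.sin (2 * Real.pi * a * r / N + 2 * Real.pi * a * s / d) : ℝ) : ℂ)
        * z (((r * b : ℕ) : ZMod N)) := by
  obtain ⟨b₁, hb₁⟩ := hdb
  have hNdd : N / d * d = N := Nat.div_mul_cancel hdN
  have hNd0 : 0 < N / d := Nat.div_pos (Nat.le_of_dvd hN hdN) hd0
  have hNr : (N : ℝ) = (N / d : ℕ) * d := by exact_mod_cast hNdd.symm
  have hNne : (N : ℝ) ≠ 0 := Nat.cast_ne_zero.2 hN.ne'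
  have hdne : (d : ℝ) ≠ 0 := Nat.cast_ne_zero.2 hd0.ne'
  have hNdne : ((N/d : ℕ) : ℝ) ≠ 0 := Nat.cast_ne_zero.2 hNd0.ne'
  unfold Wf
  congr 1
  rw [show (range N) = range (N/d * d) from by rw [hNdd]]
  rw [sum_range_mul_decomp (fun k => ((Real.sin (2 * Real.pi * a * k / N) : ℝ) : ℂ)
    * z (((k * b : ℕ) : ZMod N))) (N/d) d]
  rw [Finset.sum_comm]
  refine Finset.sum_congr rfl fun r hr => ?_
  rw [Complex.ofReal_sum, Finset.sum_mul]
  refine Finset.sum_congr rfl fun s hs => ?_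
  have hzarg : (((N/d * s + r) * b : ℕ) : ZMod N) = ((r * b : ℕ) : ZMod N) := by
    have hnat : (N/d * s + r) * b = N * (s * b₁) + r * b := by
      rw [hb₁]
      conv_rhs => rw [← hNdd]
      ring
    rw [hnat]
    push_cast
    simp [ZMod.natCast_self]
  have hsarg : (2 * Real.pi * a * ((N/d * s + r : ℕ) : ℝ) / N) =
      2 * Real.pi * a * r / N + 2 * Real.pi * a * s / d := by
    push_cast
    rw [hNr]
    field_simp
    ring
  rw [hzarg, hsarg]

lemma Wf_eq_zero (N : ℕ) (hN : 0 < N) (z : ZMod N → ℂ) (a b : ℕ)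
    (h : ¬ (Nat.gcd b N ∣ a)) : Wf N z a b = 0 := by
  have hdN : Nat.gcd b N ∣ N := Nat.gcd_dvd_right b N
  have hdb : Nat.gcd b N ∣ b := Nat.gcd_dvd_left b N
  have hd0 : 0 < Nat.gcd b N := Nat.gcd_pos_of_pos_right b hN
  rw [Wf_sum_decomp N hN z a b (Nat.gcd b N) hdN hd0 hdb]
  have h1 : ∀ r ∈ range (N / Nat.gcd b N),
      ((∑ s ∈ range (Nat.gcd b N), Real.sin (2 * Real.pi * a * r / N + 2 * Real.pi * a * s / (Nat.gcd b N)) : ℝ) : ℂ)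
        * z (((r * b : ℕ) : ZMod N)) = 0 := by
    intro r _
    rw [sum_sin_arith _ a (Nat.gcd b N) hd0, if_neg h]
    simp
  rw [Finset.sum_congr rfl h1]
  simp

lemma Wf_eq (N : ℕ) (hN : 0 < N) (z : ZMod N → ℂ) (hz0 : z 0 = 0)
    (d m₁ n₁ : ℕ) (hdN : d ∣ N) (hd0 : 0 < d) [NeZero (N / d)]
    (v : (ZMod (N / d))ˣ) (hv : ((v : (ZMod (N / d))ˣ) : ZMod (N / d)) = (n₁ : ZMod (N / d))) :
    Wf N z (d * m₁) (d * n₁) =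
      (d : ℂ) * zhat N d z ((m₁ : ZMod (N / d)) * ((v⁻¹ : (ZMod (N / d))ˣ) : ZMod (N / d))) := by
  have hNd0 : 0 < N / d := Nat.pos_of_ne_zero (NeZero.ne _)
  have hNdd : N / d * d = N := Nat.div_mul_cancel hdN
  have hNr : (N : ℝ) = (N / d : ℕ) * d := by exact_mod_cast hNdd.symm
  have hNne : (N : ℝ) ≠ 0 := Nat.cast_ne_zero.2 hN.ne'
  have hdne : (d : ℝ) ≠ 0 := Nat.cast_ne_zero.2 hd0.ne'
  have hNdne : ((N/d : ℕ) : ℝ) ≠ 0 := Nat.cast_ne_zero.2 hNd0.ne'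
  rw [Wf_sum_decomp N hN z (d * m₁) (d * n₁) d hdN hd0 ⟨n₁, rfl⟩]
  set t : ZMod (N/d) := (m₁ : ZMod (N/d)) * ((v⁻¹ : (ZMod (N/d))ˣ) : ZMod (N/d)) with ht
  have step1 : ∀ r ∈ range (N/d),
      ((∑ s ∈ range d, Real.sin (2 * Real.pi * (d*m₁ : ℕ) * r / N + 2 * Real.pi * (d*m₁ : ℕ) * s / d) : ℝ) : ℂ)
        * z (((r * (d*n₁) : ℕ) : ZMod N))
      = (d : ℂ) * (z (((d * (((n₁*r : ℕ) : ZMod (N/d))).val : ℕ) : ZMod N))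
          * ((sZ (N/d) ((m₁ : ZMod (N/d)) * ((r : ℕ) : ZMod (N/d))) : ℝ) : ℂ)) := by
    intro r _
    rw [sum_sin_arith _ (d*m₁) d hd0, if_pos ⟨m₁, rfl⟩]
    have hzr : (((r * (d*n₁)) : ℕ) : ZMod N) = ((d * (((n₁*r : ℕ) : ZMod (N/d))).val : ℕ) : ZMod N) := by
      rw [show r * (d*n₁) = d * (n₁*r) from by ring]
      exact dmul_cast N d hdN hN (n₁*r)
    have hsr : Real.sin (2 * Real.pi * ((d*m₁ : ℕ) : ℝ) * r / N)
        = sZ (N/d) ((m₁ : ZMod (N/d)) * ((r : ℕ) : ZMod (N/d))) := by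
      have harg : (2 * Real.pi * ((d*m₁ : ℕ) : ℝ) * r / N)
          = 2 * Real.pi * ((m₁*r : ℕ) : ℝ) / ((N/d : ℕ) : ℝ) := by
        push_cast
        rw [hNr]
        field_simp
      rw [harg, ← sZ_natCast (N/d) hNd0 (m₁*r)]
      congr 1
      push_cast
      ring
    rw [hzr, hsr]
    push_cast
    ring
  rw [Finset.sum_congr rfl step1, ← Finset.mul_sum]
  set G : ZMod (N/d) → ℂ := fun x => z (((d * ((((n₁ : ℕ) : ZMod (N/d)) * x)).val : ℕ) : ZMod N))
      * ((sZ (N/d) ((m₁ : ZMod (N/d)) * x) : ℝ) : ℂ) with hG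
  set g : ZMod (N/d) → ℂ := fun y => z (((d * y.val : ℕ) : ZMod N)) * ((sZ (N/d) (t * y) : ℝ) : ℂ) with hg
  have e1 : ∀ r ∈ range (N/d),
      (z (((d * (((n₁*r : ℕ) : ZMod (N/d))).val : ℕ) : ZMod N))
        * ((sZ (N/d) ((m₁ : ZMod (N/d)) * ((r : ℕ) : ZMod (N/d))) : ℝ) : ℂ))
      = G (((r : ℕ) : ZMod (N/d))) := by
    intro r _
    rw [hG]
    simp only []
    congr 3
    push_cast
    ring
  rw [Finset.sum_congr rfl e1, ← sum_zmod_eq_range (N/d) G]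
  have hveq : ∀ x : ZMod (N/d), G x = g (((v : (ZMod (N/d))ˣ) : ZMod (N/d)) * x) := by
    intro x
    rw [hG, hg]
    simp only []
    have h1 : ((n₁ : ℕ) : ZMod (N/d)) * x = ((v : (ZMod (N/d))ˣ) : ZMod (N/d)) * x := by rw [hv]
    have h2 : t * (((v : (ZMod (N/d))ˣ) : ZMod (N/d)) * x) = (m₁ : ZMod (N/d)) * x := by
      rw [ht, mul_assoc, ← mul_assoc (((v⁻¹ : (ZMod (N/d))ˣ) : ZMod (N/d))), ← Units.val_mul,
        inv_mul_cancel, Units.val_one, one_mul]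
    rw [h1, h2]
  have e2 := Fintype.sum_equiv
    (⟨fun x => ((v : (ZMod (N/d))ˣ) : ZMod (N/d)) * x,
      fun y => ((v⁻¹ : (ZMod (N/d))ˣ) : ZMod (N/d)) * y,
      fun x => by simp [← mul_assoc, ← Units.val_mul],
      fun y => by simp [← mul_assoc, ← Units.val_mul]⟩ : ZMod (N/d) ≃ ZMod (N/d))
    G g hveq
  rw [e2, zhat_eq N d hdN hN z hz0 t]
  rw [hg]
  ring

lemma sin_flip (N a k : ℕ) (hN : 0 < N) (hk : k ≤ N) :
    Real.sin (2 * Real.pi * a * ((N - k : ℕ) : ℝ) / N) = - Real.sin (2 * Real.pi * a * k / N) := by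
  have h1 : (2 * Real.pi * a * ((N - k : ℕ) : ℝ) / N) = 2 * Real.pi * ((a * (N - k) : ℕ) : ℝ) / N := by
    push_cast; ring
  have h2 : (2 * Real.pi * (a : ℝ) * k / N) = 2 * Real.pi * ((a * k : ℕ) : ℝ) / N := by
    push_cast; ring
  rw [h1, h2, ← sZ_natCast N hN, ← sZ_natCast N hN]
  have h3 : ((a * (N - k) : ℕ) : ZMod N) = -((a * k : ℕ) : ZMod N) := by
    push_cast [Nat.cast_sub hk]
    rw [ZMod.natCast_self]
    ring
  rw [h3, sZ_neg N hN]

lemma entry_eq (N : ℕ) (hN : 2 ≤ N) (z : ZMod N → ℂ) (hz : ∀ a : ZMod N, z (-a) = -z a)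
    (m n : Fin ((N - 1) / 2)) :
    ((sinMatrix N).map (fun r => (r : ℂ)) * ZMat N z) m n = Wf N z ((m : ℕ) + 1) ((n : ℕ) + 1) := by
  have hN0 : 0 < N := by omega
  have hz0 : z 0 = 0 := by
    have h := hz 0
    rw [neg_zero] at h
    linear_combination h / 2
  set f : ℕ → ℂ := fun k => ((Real.sin (2 * Real.pi * ((m : ℕ) + 1 : ℕ) * k / N) : ℝ) : ℂ)
      * z (((k * ((n : ℕ) + 1) : ℕ) : ZMod N)) with hf
  have hfold := range_sum_fold N hN f ?_ ?_ ?_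
  · have hentry : ((sinMatrix N).map (fun r => (r : ℂ)) * ZMat N z) m n = ∑ k ∈ Icc 1 ((N-1)/2), f k := by
      rw [Matrix.mul_apply]
      rw [show Finset.Icc 1 ((N-1)/2) = Finset.Ico 1 ((N-1)/2 + 1) from by rw [Finset.Ico_add_one_right_eq_Icc]]
      rw [Finset.sum_Ico_eq_sum_range]
      simp only [Nat.add_sub_cancel]
      rw [← Fin.sum_univ_eq_sum_range (fun k => f (1 + k)) ((N-1)/2)]
      refine Finset.sum_congr rfl fun k _ => ?_
      rw [hf]
      simp only [Matrix.map_apply, Matrix.of_apply, sinMatrix, ZMat]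
      congr 2
      · push_cast; ring
      · push_cast; ring
    rw [hentry, Wf, hfold]
    ring
  · rw [hf]; simp
  · intro k hk1 hk2
    rw [hf]
    simp only []
    rw [sin_flip N ((m:ℕ)+1) k hN0 (by omega)]
    have hzz : z ((((N - k) * ((n:ℕ)+1) : ℕ)) : ZMod N) = - z (((k * ((n:ℕ)+1) : ℕ) : ZMod N)) := by
      have harg : (((N - k) * ((n:ℕ)+1) : ℕ) : ZMod N) = -((k * ((n:ℕ)+1) : ℕ) : ZMod N) := by
        push_cast [Nat.cast_sub (by omega : k ≤ N)]
        rw [ZMod.natCast_self]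
        ring
      rw [harg, hz]
    rw [hzz]
    push_cast
    ring
  · intro ⟨p, hp⟩
    rw [hf]
    simp only []
    have hp0 : 0 < p := by omega
    have hN2 : N / 2 = p := by omega
    have hpr : ((p:ℝ)) ≠ 0 := Nat.cast_ne_zero.2 hp0.ne'
    have hNr : (N : ℝ) = 2 * p := by exact_mod_cast hp
    have harg : (2 * Real.pi * (((m:ℕ)+1 : ℕ) : ℝ) * ((N/2 : ℕ) : ℝ) / N) = ((m:ℕ)+1 : ℕ) * Real.pi := by
      rw [hN2, hNr]
      push_cast
      field_simp
    rw [harg, Real.sin_nat_mul_pi]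
    simp


lemma zhat_neg (N d : ℕ) (hd : d ∣ N) (hN : 0 < N) [NeZero (N / d)] (z : ZMod N → ℂ)
    (hz0 : z 0 = 0) (t : ZMod (N / d)) : zhat N d z (-t) = - zhat N d z t := by
  have hNd0 : 0 < N / d := Nat.pos_of_ne_zero (NeZero.ne _)
  rw [zhat_eq N d hd hN z hz0, zhat_eq N d hd hN z hz0]
  have hterm : ∀ x : ZMod (N / d),
      z (((d * x.val : ℕ) : ZMod N)) * ((sZ (N / d) ((-t) * x) : ℝ) : ℂ)
      = -(z (((d * x.val : ℕ) : ZMod N)) * ((sZ (N / d) (t * x) : ℝ) : ℂ)) := by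
    intro x
    rw [show (-t) * x = -(t * x) from by ring, sZ_neg (N / d) hNd0]
    push_cast
    ring
  rw [Finset.sum_congr rfl (fun x _ => hterm x)]
  rw [Finset.sum_neg_distrib]
  ring

theorem det_sinMatrix_mul_ZMat (N : ℕ) (hN : 2 ≤ N) (z : ZMod N → ℂ)
    (hz : ∀ a : ZMod N, z (-a) = -z a)
    (T : (d : ℕ) → Finset (ZMod (N / d))ˣ)
    (hT : ∀ d ∈ N.divisors.filter (fun d => 2 < N / d), ∀ w : (ZMod (N / d))ˣ,
      ∃! u : (ZMod (N / d))ˣ, u ∈ T d ∧ (u = w ∨ u = -w)) :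
    ((sinMatrix N).map (fun r => (r : ℂ)) * ZMat N z).det =
      ∏ d ∈ N.divisors.filter (fun d => 2 < N / d),
        Matrix.det (Matrix.of fun u v : {u : (ZMod (N / d))ˣ // u ∈ T d} =>
          (d : ℂ) * zhat N d z (((u : (ZMod (N / d))ˣ) * (v : (ZMod (N / d))ˣ)⁻¹ :
            (ZMod (N / d))ˣ) : ZMod (N / d))) := by
  classical
  have hN0 : 0 < N := by omega
  have hz0 : z 0 = 0 := by
    have h := hz 0
    rw [neg_zero] at h
    linear_combination h / 2
  set M := (sinMatrix N).map (fun r => (r : ℂ)) * ZMat N z with hM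
  set b : Fin ((N - 1) / 2) → ℕ := fun m => N / Nat.gcd ((m : ℕ) + 1) N with hb
  -- basic facts about indices
  have hgpos : ∀ m : Fin ((N - 1) / 2), 0 < Nat.gcd ((m : ℕ) + 1) N :=
    fun m => Nat.gcd_pos_of_pos_right _ hN0
  have hgdvdN : ∀ m : Fin ((N - 1) / 2), Nat.gcd ((m : ℕ) + 1) N ∣ N :=
    fun m => Nat.gcd_dvd_right _ _
  have hgdvdm : ∀ m : Fin ((N - 1) / 2), Nat.gcd ((m : ℕ) + 1) N ∣ ((m : ℕ) + 1) :=
    fun m => Nat.gcd_dvd_left _ _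
  have hmle : ∀ m : Fin ((N - 1) / 2), 2 * ((m : ℕ) + 1) ≤ N - 1 := by
    intro m
    have := m.isLt
    omega
  have hglt : ∀ m : Fin ((N - 1) / 2), 2 < N / Nat.gcd ((m : ℕ) + 1) N := by
    intro m
    set g := Nat.gcd ((m : ℕ) + 1) N
    have h1 : g ≤ (m : ℕ) + 1 := Nat.le_of_dvd (by omega) (hgdvdm m)
    have h2 : N / g * g = N := Nat.div_mul_cancel (hgdvdN m)
    have h3 : 2 * g ≤ N - 1 := le_trans (by have := hmle m; omega) (le_refl _)
    by_contra hc
    push_neg at hc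
    have : N ≤ 2 * g := by
      calc N = N / g * g := h2.symm
      _ ≤ 2 * g := Nat.mul_le_mul_right g (by omega)
    omega
  -- block triangularity
  have hbt : M.BlockTriangular b := by
    intro i j hlt
    have hnd : ¬ (Nat.gcd ((j : ℕ) + 1) N ∣ ((i : ℕ) + 1)) := by
      intro hdvd
      have h1 : Nat.gcd ((j : ℕ) + 1) N ∣ Nat.gcd ((i : ℕ) + 1) N :=
        Nat.dvd_gcd hdvd (Nat.gcd_dvd_right _ N)
      have h2 : b i ≤ b j :=
        Nat.div_le_div_left (Nat.le_of_dvd (hgpos i) h1) (hgpos j)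
      omega
    rw [hM, entry_eq N hN z hz i j]
    exact Wf_eq_zero N hN0 z _ _ hnd
  rw [hbt.det]
  -- the image of b
  have himage : Finset.image b Finset.univ =
      Finset.image (fun d => N / d) (N.divisors.filter (fun d => 2 < N / d)) := by
    ext a
    simp only [Finset.mem_image, Finset.mem_univ, true_and, Finset.mem_filter, Nat.mem_divisors]
    constructor
    · rintro ⟨m, rfl⟩
      exact ⟨Nat.gcd ((m : ℕ) + 1) N, ⟨⟨hgdvdN m, hN0.ne'⟩, hglt m⟩, rfl⟩
    · rintro ⟨d, ⟨⟨hdN, _⟩, hd2⟩, rfl⟩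
      have hd0 : 0 < d := Nat.pos_of_dvd_of_pos hdN hN0
      have h3 : 3 * d ≤ N := by
        have h2 : N / d * d = N := Nat.div_mul_cancel hdN
        calc 3 * d ≤ N / d * d := Nat.mul_le_mul_right d (by omega)
        _ = N := h2
      have hdlt : d - 1 < (N - 1) / 2 := by omega
      refine ⟨⟨d - 1, hdlt⟩, ?_⟩
      rw [hb]
      simp only []
      congr 2
      show Nat.gcd ((d - 1) + 1) N = d
      rw [show d - 1 + 1 = d from by omega]
      exact Nat.gcd_eq_left hdN
    -- injectivity for prod_image
  have hinj : ∀ x ∈ N.divisors.filter (fun d => 2 < N / d), ∀ y ∈ N.divisors.filter (fun d => 2 < N / d),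
      N / x = N / y → x = y := by
    intro x hx y hy hxy
    rw [Finset.mem_filter, Nat.mem_divisors] at hx hy
    have h1 : N / (N / x) = N / (N / y) := by rw [hxy]
    rwa [Nat.div_div_self hx.1.1 hN0.ne', Nat.div_div_self hy.1.1 hN0.ne'] at h1
  rw [himage, Finset.prod_image hinj]
  -- per-divisor blocks
  refine Finset.prod_congr rfl fun d hdS => ?_
  have hdS' := hdS
  rw [Finset.mem_filter, Nat.mem_divisors] at hdS'
  obtain ⟨⟨hdN, -⟩, hNd2⟩ := hdS'
  have hd0 : 0 < d := Nat.pos_of_dvd_of_pos hdN hN0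
  have hNd0 : 0 < N / d := by omega
  haveI : NeZero (N / d) := ⟨hNd0.ne'⟩
  have hdd : d * (N / d) = N := Nat.mul_div_cancel' hdN
  have hTd := hT d hdS
  -- the subtype of block indices
  have hgcd : ∀ m : {m : Fin ((N - 1) / 2) // b m = N / d},
      Nat.gcd ((m.1 : ℕ) + 1) N = d := by
    intro m
    have hbm : N / Nat.gcd ((m.1 : ℕ) + 1) N = N / d := m.2
    have h1 := Nat.div_div_self (hgdvdN m.1) hN0.ne'
    have h2 := Nat.div_div_self hdN hN0.ne'
    rw [← h1, hbm, h2]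
  set q : {m : Fin ((N - 1) / 2) // b m = N / d} → ℕ := fun m => ((m.1 : ℕ) + 1) / d with hqdef
  have hdq : ∀ m, d * q m = (m.1 : ℕ) + 1 := by
    intro m
    have h := hgdvdm m.1
    rw [hgcd m] at h
    exact Nat.mul_div_cancel' h
  have hq1 : ∀ m, 1 ≤ q m := by
    intro m
    have h := hdq m
    rcases Nat.eq_zero_or_pos (q m) with h0 | h1
    · rw [h0] at h; omega
    · exact h1
  have hqlt : ∀ m, q m < N / d := by
    intro m
    by_contra hc
    push_neg at hc
    have h1 : d * (N / d) ≤ d * q m := Nat.mul_le_mul_left d hc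
    rw [hdd, hdq m] at h1
    have := hmle m.1
    omega
  have hcop : ∀ m, (q m).Coprime (N / d) := by
    intro m
    have h1 : Nat.gcd (d * q m) (d * (N / d)) = d * Nat.gcd (q m) (N / d) :=
      Nat.gcd_mul_left d _ _
    rw [hdq m, hdd, hgcd m] at h1
    have h2 : d * 1 = d * Nat.gcd (q m) (N / d) := by omega
    exact (Nat.eq_of_mul_eq_mul_left hd0 h2).symm
  set uq : {m : Fin ((N - 1) / 2) // b m = N / d} → (ZMod (N / d))ˣ :=
    fun m => ZMod.unitOfCoprime (q m) (hcop m) with huqdef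
  have huq_coe : ∀ m, ((uq m : (ZMod (N / d))ˣ) : ZMod (N / d)) = ((q m : ℕ) : ZMod (N / d)) :=
    fun m => ZMod.coe_unitOfCoprime _ _
  -- no unit is its own negative
  have hneg_ne : ∀ u : (ZMod (N / d))ˣ, u ≠ -u := by
    intro u heq
    have hv : (u : ZMod (N / d)) = -(u : ZMod (N / d)) := by
      conv_lhs => rw [heq]
      rw [Units.val_neg]
    set w := (u : ZMod (N / d)).val with hw
    have hcopw : w.Coprime (N / d) := ZMod.val_coe_unit_coprime u
    have hval : ((w : ℕ) : ZMod (N / d)) = (u : ZMod (N / d)) := ZMod.natCast_rightInverse _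
    have hsum : (u : ZMod (N / d)) + (u : ZMod (N / d)) = 0 := by
      nth_rewrite 1 [hv]
      exact neg_add_cancel _
    have hzero : ((2 * w : ℕ) : ZMod (N / d)) = 0 := by
      push_cast
      rw [hval, two_mul]
      exact hsum
    have hdvd : (N / d) ∣ 2 * w := (ZMod.natCast_eq_zero_iff _ _).1 hzero
    have hwlt : w < N / d := ZMod.val_lt _
    have hw0 : w ≠ 0 := by
      intro h0
      rw [h0] at hcopw
      have := Nat.coprime_zero_left (N / d) |>.1 hcopw
      omega
    obtain ⟨c, hc⟩ := hdvd
    have hc1 : c = 1 := by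
      rcases Nat.lt_or_ge c 1 with h | h
      · interval_cases c <;> omega
      · rcases Nat.lt_or_ge c 2 with h' | h'
        · omega
        · have : N / d * 2 ≤ N / d * c := Nat.mul_le_mul_left _ h'
          omega
    rw [hc1, mul_one] at hc
    have hwdvd : w ∣ N / d := ⟨2, by omega⟩
    have : Nat.gcd w (N / d) = w := Nat.gcd_eq_left hwdvd
    rw [hcopw] at this
    omega
  -- the choice function
  set e0 : {m : Fin ((N - 1) / 2) // b m = N / d} → (ZMod (N / d))ˣ :=
    fun m => (hTd (uq m)).choose with he0def
  have he0P : ∀ m, (e0 m ∈ T d ∧ (e0 m = uq m ∨ e0 m = -uq m)) :=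
    fun m => (hTd (uq m)).choose_spec.1
  have he0U : ∀ m, ∀ u', (u' ∈ T d ∧ (u' = uq m ∨ u' = -uq m)) → u' = e0 m :=
    fun m => (hTd (uq m)).choose_spec.2
  set e : {m : Fin ((N - 1) / 2) // b m = N / d} → {u : (ZMod (N / d))ˣ // u ∈ T d} :=
    fun m => ⟨e0 m, (he0P m).1⟩ with hedef
  have heinj : Function.Injective e := by
    intro m₁ m₂ heq
    have h0 : e0 m₁ = e0 m₂ := congrArg Subtype.val heq
    have hqq : uq m₁ = uq m₂ ∨ uq m₁ = -uq m₂ := by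
      rcases (he0P m₁).2 with ha | ha <;> rcases (he0P m₂).2 with hb | hb
      · left; rw [← ha, ← hb, h0]
      · right; rw [← ha, h0, hb]
      · right
        have : -uq m₁ = uq m₂ := by rw [← ha, ← hb, h0]
        rw [← this, neg_neg]
      · left
        have : -uq m₁ = -uq m₂ := by rw [← ha, ← hb, h0]
        exact neg_injective this
    have hmm : (m₁.1 : ℕ) = (m₂.1 : ℕ) := by
      rcases hqq with hq' | hq'
      · have hcoe : ((q m₁ : ℕ) : ZMod (N / d)) = ((q m₂ : ℕ) : ZMod (N / d)) := by
          rw [← huq_coe m₁, ← huq_coe m₂, hq']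
        have hval : q m₁ = q m₂ := by
          have := congrArg ZMod.val hcoe
          rwa [ZMod.val_cast_of_lt (hqlt m₁), ZMod.val_cast_of_lt (hqlt m₂)] at this
        have h1 := hdq m₁
        have h2 := hdq m₂
        rw [hval] at h1
        omega
      · exfalso
        have hcoe : ((q m₁ : ℕ) : ZMod (N / d)) = -((q m₂ : ℕ) : ZMod (N / d)) := by
          rw [← huq_coe m₁, ← huq_coe m₂, hq', Units.val_neg]
        have hzero : ((q m₁ + q m₂ : ℕ) : ZMod (N / d)) = 0 := by
          push_cast
          rw [hcoe]
          ring
        have hdvd := (ZMod.natCast_eq_zero_iff _ _).1 hzero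
        have hlt : q m₁ + q m₂ < N / d := by
          by_contra hc
          push_neg at hc
          have h1 : d * (N / d) ≤ d * (q m₁ + q m₂) := Nat.mul_le_mul_left d hc
          rw [hdd, Nat.mul_add, hdq m₁, hdq m₂] at h1
          have := hmle m₁.1
          have := hmle m₂.1
          omega
        have hpos : 0 < q m₁ + q m₂ := by have := hq1 m₁; omega
        have := Nat.le_of_dvd hpos hdvd
        omega
    exact Subtype.ext (Fin.ext hmm)
  have hesurj : Function.Surjective e := by
    rintro ⟨u, hu⟩
    set w := (u : ZMod (N / d)).val with hw
    have hwlt : w < N / d := ZMod.val_lt _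
    have hcopw : w.Coprime (N / d) := ZMod.val_coe_unit_coprime u
    have hw0 : w ≠ 0 := by
      intro h0
      rw [h0] at hcopw
      have := Nat.coprime_zero_left (N / d) |>.1 hcopw
      omega
    have hw2 : 2 * w ≠ N / d := by
      intro h2
      have hwdvd : w ∣ N / d := ⟨2, by omega⟩
      have hgl : Nat.gcd w (N / d) = w := Nat.gcd_eq_left hwdvd
      rw [hcopw] at hgl
      omega
    set q0 := min w (N / d - w) with hq0def
    have hq01 : 1 ≤ q0 := by omega
    have hq0lt : 2 * q0 < N / d := by omega
    have hval : ((w : ℕ) : ZMod (N / d)) = (u : ZMod (N / d)) := ZMod.natCast_rightInverse _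
    have hcast : ((q0 : ℕ) : ZMod (N / d)) = (u : ZMod (N / d)) ∨
        ((q0 : ℕ) : ZMod (N / d)) = -(u : ZMod (N / d)) := by
      rcases le_or_gt w (N / d - w) with hcase | hcase
      · left
        rw [show q0 = w from by omega]
        exact hval
      · right
        rw [show q0 = N / d - w from by omega, Nat.cast_sub hwlt.le, ZMod.natCast_self, hval]
        ring
    have hdq0pos : 1 ≤ d * q0 := Nat.mul_pos hd0 hq01
    have hm1 : d * q0 - 1 < (N - 1) / 2 := by
      obtain ⟨E, hE⟩ : ∃ E, N / d = E + 1 := ⟨N / d - 1, by omega⟩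
      have hmul : d * (2 * q0) ≤ d * E := Nat.mul_le_mul_left d (by omega)
      have hdE : d * E + d = N := by rw [← hdd, hE]; ring
      have hq2 : d * (2 * q0) = 2 * (d * q0) := by ring
      omega
    set m' : Fin ((N - 1) / 2) := ⟨d * q0 - 1, hm1⟩ with hm'def
    have hm'1 : (m' : ℕ) + 1 = d * q0 := by
      simp only [hm'def]
      omega
    have hbm' : b m' = N / d := by
      rw [hb]
      simp only []
      rw [hm'1]
      have h1 : Nat.gcd (d * q0) N = d := by
        have hcop0 : q0.Coprime (N / d) := by
          have hunit : IsUnit ((q0 : ℕ) : ZMod (N / d)) := by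
            rcases hcast with hc | hc
            · rw [hc]; exact u.isUnit
            · rw [hc]; exact u.isUnit.neg
          exact (ZMod.isUnit_iff_coprime q0 (N / d)).1 hunit
        conv_lhs => rw [← hdd]
        rw [Nat.gcd_mul_left d q0 (N / d), hcop0, mul_one]
      rw [h1]
    refine ⟨⟨m', hbm'⟩, ?_⟩
    have hqm : q ⟨m', hbm'⟩ = q0 := by
      rw [hqdef]
      simp only []
      rw [hm'1]
      exact Nat.mul_div_cancel_left q0 hd0
    have huqm : ((uq ⟨m', hbm'⟩ : (ZMod (N / d))ˣ) : ZMod (N / d)) = ((q0 : ℕ) : ZMod (N / d)) := by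
      rw [huq_coe, hqm]
    have hPu : u ∈ T d ∧ (u = uq ⟨m', hbm'⟩ ∨ u = -uq ⟨m', hbm'⟩) := by
      refine ⟨hu, ?_⟩
      rcases hcast with hc | hc
      · left
        apply Units.ext
        rw [huqm, hc]
      · right
        apply Units.ext
        rw [Units.val_neg, huqm, hc, neg_neg]
    have := he0U ⟨m', hbm'⟩ u hPu
    exact Subtype.ext this.symm
  -- signs
  set ε : {m : Fin ((N - 1) / 2) // b m = N / d} → ℂ :=
    fun m => if e0 m = uq m then 1 else -1 with hεdef
  have hε2 : ∀ m, ε m * ε m = 1 := by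
    intro m
    rw [hεdef]
    simp only []
    split_ifs <;> norm_num
  -- entry identity
  set G : Matrix {u : (ZMod (N / d))ˣ // u ∈ T d} {u : (ZMod (N / d))ˣ // u ∈ T d} ℂ :=
    Matrix.of fun u v : {u : (ZMod (N / d))ˣ // u ∈ T d} =>
      (d : ℂ) * zhat N d z (((u : (ZMod (N / d))ˣ) * (v : (ZMod (N / d))ˣ)⁻¹ :
        (ZMod (N / d))ˣ) : ZMod (N / d)) with hGdef
  have hMW : ∀ m n : {m : Fin ((N - 1) / 2) // b m = N / d},
      M m.1 n.1 = (d : ℂ) * zhat N d z (((q m : ℕ) : ZMod (N / d)) *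
        (((uq n)⁻¹ : (ZMod (N / d))ˣ) : ZMod (N / d))) := by
    intro m n
    rw [hM, entry_eq N hN z hz m.1 n.1]
    rw [show (m.1 : ℕ) + 1 = d * q m from (hdq m).symm,
        show (n.1 : ℕ) + 1 = d * q n from (hdq n).symm]
    exact Wf_eq N hN0 z hz0 d (q m) (q n) hdN hd0 (uq n) (huq_coe n)
  have hentry : ∀ m n : {m : Fin ((N - 1) / 2) // b m = N / d},
      G (e m) (e n) = ε m * ε n * M m.1 n.1 := by
    intro m n
    have hGmn : G (e m) (e n) = (d : ℂ) * zhat N d z ((e0 m * (e0 n)⁻¹ :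
        (ZMod (N / d))ˣ) : ZMod (N / d)) := by
      rw [hGdef]
      rfl
    rw [hGmn, hMW m n]
    have harg : ((uq m * (uq n)⁻¹ : (ZMod (N / d))ˣ) : ZMod (N / d)) =
        ((q m : ℕ) : ZMod (N / d)) * (((uq n)⁻¹ : (ZMod (N / d))ˣ) : ZMod (N / d)) := by
      rw [Units.val_mul, huq_coe]
    rcases (he0P m).2 with ha | ha <;> rcases (he0P n).2 with hb | hb
    · have hεm : ε m = 1 := by rw [hεdef]; simp only []; rw [if_pos ha]
      have hεn : ε n = 1 := by rw [hεdef]; simp only []; rw [if_pos hb]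
      rw [ha, hb, hεm, hεn, harg]
      ring
    · have hεm : ε m = 1 := by rw [hεdef]; simp only []; rw [if_pos ha]
      have hεn : ε n = -1 := by
        rw [hεdef]; simp only []
        rw [if_neg (by rw [hb]; exact fun hcc => hneg_ne (uq n) (hcc.symm))]
      rw [ha, hb, hεm, hεn]
      rw [inv_neg, mul_neg, Units.val_neg, harg, zhat_neg N d hdN hN0 z hz0]
      ring
    · have hεm : ε m = -1 := by
        rw [hεdef]; simp only []
        rw [if_neg (by rw [ha]; exact fun hcc => hneg_ne (uq m) (hcc.symm))]
      have hεn : ε n = 1 := by rw [hεdef]; simp only []; rw [if_pos hb]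
      rw [ha, hb, hεm, hεn]
      rw [neg_mul, Units.val_neg, harg, zhat_neg N d hdN hN0 z hz0]
      ring
    · have hεm : ε m = -1 := by
        rw [hεdef]; simp only []
        rw [if_neg (by rw [ha]; exact fun hcc => hneg_ne (uq m) (hcc.symm))]
      have hεn : ε n = -1 := by
        rw [hεdef]; simp only []
        rw [if_neg (by rw [hb]; exact fun hcc => hneg_ne (uq n) (hcc.symm))]
      rw [ha, hb, hεm, hεn]
      rw [inv_neg, neg_mul, mul_neg, neg_neg, harg]
      ring
  -- determinant computation
  set E : {m : Fin ((N - 1) / 2) // b m = N / d} ≃ {u : (ZMod (N / d))ˣ // u ∈ T d} :=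
    Equiv.ofBijective e ⟨heinj, hesurj⟩ with hEdef
  have hblock : M.toSquareBlock b (N / d) =
      Matrix.of (fun i j : {m : Fin ((N - 1) / 2) // b m = N / d} =>
        ε i * ((Matrix.of (fun i j : {m : Fin ((N - 1) / 2) // b m = N / d} =>
          ε j * (G.submatrix E E) i j)) i j)) := by
    ext i j
    simp only [Matrix.toSquareBlock_def, Matrix.of_apply, Matrix.submatrix_apply]
    have hEi : E i = e i := rfl
    have hEj : E j = e j := rfl
    rw [hEi, hEj, hentry i j]
    have h2i := hε2 i
    have h2j := hε2 j
    calc M i.1 j.1 = (ε i * ε i) * ((ε j * ε j) * M i.1 j.1) := by rw [h2i, h2j]; ring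
    _ = ε i * (ε j * (ε i * ε j * M i.1 j.1)) := by ring
  rw [hblock, Matrix.det_mul_column, Matrix.det_mul_row, Matrix.det_submatrix_equiv_self E G]
  have hprod : (∏ i : {m : Fin ((N - 1) / 2) // b m = N / d}, ε i) *
      (∏ i : {m : Fin ((N - 1) / 2) // b m = N / d}, ε i) = 1 := by
    rw [← Finset.prod_mul_distrib]
    exact Finset.prod_eq_one fun i _ => hε2 i
  rw [← mul_assoc, hprod, one_mul]
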